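/- Let λ > 2, h₁ = !![1, 0; -λ, 1] (so that h₁ⁿ.z = z/(1 − nλz) for n ≥ 1), and h₂ = !![-λ/2, 1; -3λ²/4 - 1, 3λ/2] with h₂⁻¹ = !![3λ/2, -1; 3λ²/4 + 1, -λ/2]. Then there exists a bounded open disc 𝓔₂ ⊂ ℂ with center on the real axis such that: (i) the real interval [2/(2−λ), 0) is contained in 𝓔₂; (ii) for every integer n ≥ 1 and every z in the closure of 𝓔₁, 1 − nλz ≠ 0 and z/(1 − nλz) ∈ 𝓔₂; (iii) for every w in the closure of 𝓔₂, (3λ²/4 + 1)w − λ/2 ≠ 0 and ((3λ/2)w − 1)/((3λ²/4 + 1)w − λ/2) ∈ 𝓔₁. -/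

import Mathlib

set_option maxHeartbeats 4000000

lemma crit_eq (p q : ℝ) (z : ℂ) :
    ((z - (p:ℂ)) * (starRingEnd ℂ) (z - (q:ℂ))).re
      = (z.re - p) * (z.re - q) + z.im ^ 2 := by
  simp [Complex.mul_re, Complex.sub_re, Complex.sub_im, Complex.conj_re, Complex.conj_im]
  ring

lemma mem_ball_crit {C R p q : ℝ} (hR : 0 < R) (hp : p = C - R) (hq : q = C + R) (z : ℂ) :
    z ∈ Metric.ball ((C:ℝ):ℂ) R ↔ (z.re - p) * (z.re - q) + z.im ^ 2 < 0 := by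
  subst hp hq
  rw [Metric.mem_ball, Complex.dist_eq]
  have h1 : ‖z - (C:ℂ)‖ ^ 2 = (z.re - C) ^ 2 + z.im ^ 2 := by
    rw [Complex.sq_norm, Complex.normSq_apply]
    simp [Complex.sub_re, Complex.sub_im]
    ring
  constructor
  · intro h
    nlinarith [norm_nonneg (z - (C:ℂ))]
  · intro h
    nlinarith [norm_nonneg (z - (C:ℂ))]

lemma mem_closedBall_crit {C R p q : ℝ} (hR : 0 < R) (hp : p = C - R) (hq : q = C + R) (z : ℂ) :
    z ∈ Metric.closedBall ((C:ℝ):ℂ) R ↔ (z.re - p) * (z.re - q) + z.im ^ 2 ≤ 0 := by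
  subst hp hq
  rw [Metric.mem_closedBall, Complex.dist_eq]
  have h1 : ‖z - (C:ℂ)‖ ^ 2 = (z.re - C) ^ 2 + z.im ^ 2 := by
    rw [Complex.sq_norm, Complex.normSq_apply]
    simp [Complex.sub_re, Complex.sub_im]
    ring
  constructor
  · intro h
    nlinarith [norm_nonneg (z - (C:ℂ))]
  · intro h
    nlinarith [norm_nonneg (z - (C:ℂ))]

lemma moebius_complex (a b c d p q : ℝ) (z : ℂ)
    (hz : (c:ℂ) * z + d ≠ 0) (hp : (c:ℂ) * p + d ≠ 0) (hq : (c:ℂ) * q + d ≠ 0) :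
    (((a:ℂ)*z+b)/((c:ℂ)*z+d) - ((a:ℂ)*p+b)/((c:ℂ)*p+d)) *
      (starRingEnd ℂ) (((a:ℂ)*z+b)/((c:ℂ)*z+d) - ((a:ℂ)*q+b)/((c:ℂ)*q+d)) *
      ((((c:ℂ)*p+d) * ((c:ℂ)*q+d)) * (((c:ℂ)*z+d) * (starRingEnd ℂ) ((c:ℂ)*z+d)))
    = ((a:ℂ)*d - (b:ℂ)*c)^2 * ((z - p) * (starRingEnd ℂ) (z - q)) := by
  have hz' : (c:ℂ) * (starRingEnd ℂ) z + d ≠ 0 := by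
    intro h
    apply hz
    have := congrArg (starRingEnd ℂ) h
    simpa [map_add, map_mul, Complex.conj_ofReal] using this
  simp only [map_sub, map_div₀, map_add, map_mul, Complex.conj_ofReal]
  rw [div_sub_div _ _ hz hp, div_sub_div _ _ hz' hq, div_mul_div_comm, div_mul_eq_mul_div,
    div_eq_iff (mul_ne_zero (mul_ne_zero hz hp) (mul_ne_zero hz' hq))]
  ring

lemma moebius_re (a b c d p q : ℝ) (z : ℂ)
    (hz : (c:ℂ) * z + d ≠ 0) (hp : c * p + d ≠ 0) (hq : c * q + d ≠ 0) :
    (((((a:ℂ)*z+b)/((c:ℂ)*z+d)).re - (a*p+b)/(c*p+d)) *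
        ((((a:ℂ)*z+b)/((c:ℂ)*z+d)).re - (a*q+b)/(c*q+d))
      + (((a:ℂ)*z+b)/((c:ℂ)*z+d)).im ^ 2) *
      ((c*p+d) * (c*q+d) * Complex.normSq ((c:ℂ)*z+d))
    = (a*d - b*c)^2 * ((z.re - p) * (z.re - q) + z.im ^ 2) := by
  have hp' : (c:ℂ) * p + d ≠ 0 := by
    intro h; apply hp
    exact_mod_cast (by push_cast at h ⊢; exact_mod_cast h : ((c*p+d : ℝ):ℂ) = 0)
  have hq' : (c:ℂ) * q + d ≠ 0 := by
    intro h; apply hq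
    exact_mod_cast (by push_cast at h ⊢; exact_mod_cast h : ((c*q+d : ℝ):ℂ) = 0)
  have key := moebius_complex a b c d p q z hz hp' hq'
  set w : ℂ := ((a:ℂ)*z+b)/((c:ℂ)*z+d) with hw
  have hu : (((a*p+b)/(c*p+d) : ℝ) : ℂ) = ((a:ℂ)*p+b)/((c:ℂ)*p+d) := by push_cast; ring
  have hv : (((a*q+b)/(c*q+d) : ℝ) : ℂ) = ((a:ℂ)*q+b)/((c:ℂ)*q+d) := by push_cast; ring
  have hms : ((c:ℂ)*z+d) * (starRingEnd ℂ) ((c:ℂ)*z+d) = ((Complex.normSq ((c:ℂ)*z+d) : ℝ) : ℂ) :=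
    Complex.mul_conj _
  rw [← hu, ← hv, hms] at key
  have e1 : ((c:ℂ)*p+d)*((c:ℂ)*q+d)*((Complex.normSq ((c:ℂ)*z+d):ℝ):ℂ)
      = (((c*p+d)*(c*q+d)*Complex.normSq ((c:ℂ)*z+d) : ℝ) : ℂ) := by push_cast; ring
  have e2 : ((a:ℂ)*d - (b:ℂ)*c)^2 = (((a*d-b*c)^2 : ℝ) : ℂ) := by push_cast; ring
  rw [e1, e2] at key
  have hre := congrArg Complex.re key
  have r1 : ∀ (X : ℂ) (r : ℝ), (X * (r:ℂ)).re = X.re * r := by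
    intro X r; simp [Complex.mul_re]
  have r2 : ∀ (r : ℝ) (X : ℂ), ((r:ℂ) * X).re = r * X.re := by
    intro r X; simp [Complex.mul_re]
  rw [r1, r2, crit_eq, crit_eq] at hre
  linarith [hre]

lemma disc_incl {p a b q x y : ℝ} (hpa : p < a) (hbq : b < q) (hab : a ≤ b)
    (h : (x - a) * (x - b) + y ^ 2 ≤ 0) : (x - p) * (x - q) + y ^ 2 < 0 := by
  have hax : a ≤ x := by nlinarith [sq_nonneg y, sq_nonneg (x - a)]
  have hxb : x ≤ b := by nlinarith [sq_nonneg y, sq_nonneg (x - b)]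
  nlinarith [mul_nonneg (sub_nonneg.2 hax) (sub_nonneg.2 hxb),
    mul_pos (sub_pos.2 hpa) (sub_pos.2 (lt_of_le_of_lt hab hbq)),
    mul_pos (sub_pos.2 (lt_of_lt_of_le hpa hab)) (sub_pos.2 hbq)]

lemma img_sub (a b c d p q : ℝ) (hp : c * p + d ≠ 0) (hq : c * q + d ≠ 0) :
    (a*q+b)/(c*q+d) - (a*p+b)/(c*p+d) = (a*d - b*c) * (q - p) / ((c*p+d) * (c*q+d)) := by
  rw [div_sub_div _ _ hq hp, div_eq_div_iff (mul_ne_zero hq hp) (mul_ne_zero hp hq)]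
  ring

/-- For `λ > 2` there is a bounded open disc `𝓔₂ ⊂ ℂ` centered on the real
axis containing `[2/(2−λ), 0)` such that all the maps `h₁ⁿ : z ↦ z/(1 − nλz)` (`n ≥ 1`)
send the closure of `𝓔₁` into `𝓔₂`, and `h₂⁻¹ : w ↦ ((3λ/2)w − 1)/((3λ²/4 + 1)w − λ/2)`
sends the closure of `𝓔₂` into `𝓔₁`. -/
theorem exists_disc_E2
    (lam : ℝ) (hlam : 2 < lam)
    (E1 : Set ℂ)
    (hE1 : E1 = Metric.ball ((((2 * lam) / ((lam + 2) * (lam - 2)) : ℝ)) : ℂ)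
      (4 / ((lam + 2) * (lam - 2)))) :
    ∃ (c r : ℝ) (E2 : Set ℂ), 0 < r ∧ E2 = Metric.ball ((c : ℝ) : ℂ) r ∧
      (∀ x : ℝ, 2 / (2 - lam) ≤ x → x < 0 → ((x : ℂ) ∈ E2)) ∧
      (∀ n : ℕ, 1 ≤ n → ∀ z ∈ closure E1,
        (1 : ℂ) - (n : ℂ) * lam * z ≠ 0 ∧ z / ((1 : ℂ) - (n : ℂ) * lam * z) ∈ E2) ∧
      (∀ w ∈ closure E2,
        (3 * (lam : ℂ) ^ 2 / 4 + 1) * w - lam / 2 ≠ 0 ∧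
        ((3 * (lam : ℂ) / 2) * w - 1) / ((3 * (lam : ℂ) ^ 2 / 4 + 1) * w - lam / 2) ∈ E1) := by
  have h20 : (0:ℝ) < lam - 2 := by linarith
  have hl2 : (0:ℝ) < lam + 2 := by linarith
  have hl0 : (0:ℝ) < lam := by linarith
  have h2lneg : (2:ℝ) - lam < 0 := by linarith
  have h2lne : (2:ℝ) - lam ≠ 0 := ne_of_lt h2lneg
  obtain ⟨C1, hC1d⟩ : ∃ x : ℝ, x = 2 * lam / ((lam + 2) * (lam - 2)) := ⟨_, rfl⟩
  obtain ⟨R1, hR1d⟩ : ∃ x : ℝ, x = 4 / ((lam + 2) * (lam - 2)) := ⟨_, rfl⟩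
  obtain ⟨p1, hp1d⟩ : ∃ x : ℝ, x = 2 / (lam + 2) := ⟨_, rfl⟩
  obtain ⟨q1, hq1d⟩ : ∃ x : ℝ, x = 2 / (lam - 2) := ⟨_, rfl⟩
  obtain ⟨p2, hp2d⟩ : ∃ x : ℝ, x = 2 / (2 - lam) - 1 / lam ^ 2 := ⟨_, rfl⟩
  obtain ⟨q2, hq2d⟩ : ∃ x : ℝ, x = 1 / lam ^ 2 := ⟨_, rfl⟩
  obtain ⟨c0, hc0d⟩ : ∃ x : ℝ, x = 1 / (2 - lam) := ⟨_, rfl⟩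
  obtain ⟨r0, hr0d⟩ : ∃ x : ℝ, x = 1 / lam ^ 2 + 1 / (lam - 2) := ⟨_, rfl⟩
  rw [← hC1d, ← hR1d] at hE1
  have hR1 : 0 < R1 := by rw [hR1d]; positivity
  have hp1 : p1 = C1 - R1 := by
    rw [hp1d, hC1d, hR1d]; field_simp; ring
  have hq1 : q1 = C1 + R1 := by
    rw [hq1d, hC1d, hR1d]; field_simp; ring
  have hr0 : 0 < r0 := by rw [hr0d]; positivity
  have hp2 : p2 = c0 - r0 := by
    rw [hp2d, hc0d, hr0d]; field_simp [h2lne]; ring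
  have hq2 : q2 = c0 + r0 := by
    rw [hq2d, hc0d, hr0d]; field_simp [h2lne]; ring
  have hq2pos : 0 < q2 := by rw [hq2d]; positivity
  have hp2neg : p2 < 0 := by
    rw [hp2d]
    have h1 : 2 / (2 - lam) < 0 := div_neg_of_pos_of_neg (by norm_num) h2lneg
    have h2 : 0 < 1 / lam ^ 2 := by positivity
    linarith
  refine ⟨c0, r0, Metric.ball ((c0:ℝ):ℂ) r0, hr0, rfl, ?_, ?_, ?_⟩
  · -- part (i)
    intro x hx1 hx2
    rw [mem_ball_crit hr0 hp2 hq2]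
    simp only [Complex.ofReal_re, Complex.ofReal_im]
    have h1 : p2 < x := by
      have h2 : 0 < 1 / lam ^ 2 := by positivity
      rw [hp2d]; linarith
    have h2 : x < q2 := lt_trans hx2 hq2pos
    nlinarith [mul_neg_of_pos_of_neg (sub_pos.2 h1) (sub_neg.2 h2)]
  · -- part (ii)
    intro n hn z hz
    rw [hE1, closure_ball _ (ne_of_gt hR1)] at hz
    have Hz := (mem_closedBall_crit hR1 hp1 hq1 z).1 hz
    obtain ⟨m, hmd⟩ : ∃ x : ℝ, x = (n:ℝ) * lam := ⟨_, rfl⟩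
    have hn1 : (1:ℝ) ≤ (n:ℝ) := by exact_mod_cast hn
    have hmge : lam ≤ m := by rw [hmd]; nlinarith
    have hm0 : 0 < m := by linarith
    have hA : lam + 2 - 2*m < 0 := by linarith
    have hB : lam - 2 - 2*m < 0 := by linarith
    have hp1q1 : p1 < q1 := by
      rw [hp1d, hq1d, div_lt_div_iff₀ hl2 h20]; nlinarith
    have hmp1 : (-m) * p1 + 1 < 0 := by
      have e : (-m) * p1 + 1 = (lam + 2 - 2*m) / (lam + 2) := by
        rw [hp1d]; field_simp; ring
      rw [e]; exact div_neg_of_neg_of_pos hA hl2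
    have hmq1 : (-m) * q1 + 1 < 0 := by
      have e : (-m) * q1 + 1 = (lam - 2 - 2*m) / (lam - 2) := by
        rw [hq1d]; field_simp; ring
      rw [e]; exact div_neg_of_neg_of_pos hB h20
    have hden : ((-m : ℝ):ℂ) * z + ((1:ℝ):ℂ) ≠ 0 := by
      intro h
      have hmC : (m:ℂ) ≠ 0 := by exact_mod_cast ne_of_gt hm0
      have hz1 : z = ((1/m : ℝ):ℂ) := by
        push_cast at h ⊢
        field_simp
        linear_combination -h
      have hre : z.re = 1/m := by rw [hz1]; simp
      have him : z.im = 0 := by rw [hz1]; simp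
      rw [hre, him] at Hz
      have hmlt : 1/m < p1 := by
        rw [hp1d, div_lt_div_iff₀ hm0 hl2]; nlinarith
      nlinarith [Hz, hmlt, hp1q1]
    have hcastden : (1:ℂ) - (n:ℂ) * (lam:ℂ) * z = ((-m : ℝ):ℂ) * z + ((1:ℝ):ℂ) := by
      rw [hmd]; push_cast; ring
    constructor
    · rw [hcastden]; exact hden
    · -- endpoint inequalities
      have hub : p2 < 2 / (lam + 2 - 2*m) := by
        have e : 2 / (lam + 2 - 2*m) - p2
            = ((lam-2)^2 + (m-lam)*(4*lam^2+2*lam-4)) / ((lam+2-2*m)*(2-lam)*lam^2) := by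
          rw [hp2d]; field_simp [hA.ne, h2lne, hl0.ne']; ring
        have hpos : 0 < ((lam-2)^2 + (m-lam)*(4*lam^2+2*lam-4)) / ((lam+2-2*m)*(2-lam)*lam^2) := by
          apply div_pos
          · nlinarith [sq_nonneg (lam-2), mul_nonneg (by linarith : (0:ℝ) ≤ m - lam)
              (by nlinarith : (0:ℝ) ≤ 4*lam^2+2*lam-4)]
          · have : 0 < (lam+2-2*m)*(2-lam) := mul_pos_of_neg_of_neg hA h2lneg
            nlinarith [sq_nonneg lam, hl0]
        linarith
      have huv : 2 / (lam + 2 - 2*m) ≤ 2 / (lam - 2 - 2*m) := by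
        have e : 2 / (lam - 2 - 2*m) - 2 / (lam + 2 - 2*m)
            = 8 / ((lam-2-2*m)*(lam+2-2*m)) := by
          field_simp [hA.ne, hB.ne]
          ring
        have hpos : 0 < 8 / ((lam-2-2*m)*(lam+2-2*m)) :=
          div_pos (by norm_num) (mul_pos_of_neg_of_neg hB hA)
        linarith
      have hvq : 2 / (lam - 2 - 2*m) < q2 := by
        have : 2 / (lam - 2 - 2*m) < 0 := div_neg_of_pos_of_neg (by norm_num) hB
        linarith
      have hmap : z / ((1:ℂ) - (n:ℂ) * (lam:ℂ) * z)
          = (((1:ℝ):ℂ) * z + ((0:ℝ):ℂ)) / (((-m : ℝ):ℂ) * z + ((1:ℝ):ℂ)) := by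
        rw [hcastden]; push_cast; ring
      rw [hmap, mem_ball_crit hr0 hp2 hq2]
      have KEY := moebius_re 1 0 (-m) 1 p1 q1 z hden (ne_of_lt hmp1) (ne_of_lt hmq1)
      have hu : ((1:ℝ)*p1+0)/((-m)*p1+1) = 2 / (lam + 2 - 2*m) := by
        rw [div_eq_div_iff (ne_of_lt hmp1) (ne_of_lt hA), hp1d]
        field_simp [hl2.ne']
        ring
      have hv : ((1:ℝ)*q1+0)/((-m)*q1+1) = 2 / (lam - 2 - 2*m) := by
        rw [div_eq_div_iff (ne_of_lt hmq1) (ne_of_lt hB), hq1d]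
        field_simp [h20.ne']
        ring
      rw [hu, hv] at KEY
      have hKpos : 0 < ((-m)*p1+1) * ((-m)*q1+1) * Complex.normSq (((-m:ℝ):ℂ)*z + ((1:ℝ):ℂ)) :=
        mul_pos (mul_pos_of_neg_of_neg hmp1 hmq1) (Complex.normSq_pos.2 hden)
      have hDelta : ((1:ℝ)*1 - 0*(-m))^2 = 1 := by ring
      rw [hDelta, one_mul] at KEY
      have Hw : ((((((1:ℝ):ℂ)*z+((0:ℝ):ℂ))/(((-m:ℝ):ℂ)*z+((1:ℝ):ℂ))).re - 2/(lam+2-2*m)) *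
            (((((1:ℝ):ℂ)*z+((0:ℝ):ℂ))/(((-m:ℝ):ℂ)*z+((1:ℝ):ℂ))).re - 2/(lam-2-2*m))
          + ((((1:ℝ):ℂ)*z+((0:ℝ):ℂ))/(((-m:ℝ):ℂ)*z+((1:ℝ):ℂ))).im ^ 2) ≤ 0 := by
        refine le_of_mul_le_mul_right ?_ hKpos
        rw [zero_mul, KEY]
        exact Hz
      exact disc_incl hub hvq huv Hw
  · -- part (iii)
    intro w hw
    rw [closure_ball _ (ne_of_gt hr0)] at hw
    have Hw := (mem_closedBall_crit hr0 hp2 hq2 w).1 hw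
    have hc3 : (0:ℝ) < 3*lam^2/4+1 := by positivity
    have hcq2 : (3*lam^2/4+1) * q2 + (-lam/2) < 0 := by
      have e : (3*lam^2/4+1) * q2 + (-lam/2) = (3*lam^2+4-2*lam^3)/(4*lam^2) := by
        rw [hq2d]; field_simp [hl0.ne']; ring
      rw [e]
      apply div_neg_of_neg_of_pos
      · nlinarith [mul_pos h20 (by nlinarith : (0:ℝ) < 2*lam^2+lam+2)]
      · positivity
    have hcp2 : (3*lam^2/4+1) * p2 + (-lam/2) < 0 := by
      nlinarith [mul_pos hc3 (neg_pos.2 hp2neg)]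
    have hQpos : (0:ℝ) < 8*lam^4 - lam^3 + 2*lam^2 + 4*lam - 8 := by
      nlinarith [mul_pos (mul_pos hl0 hl0) (mul_pos hl0 h20), mul_pos (mul_pos hl0 hl0) hl0,
        mul_pos hl0 hl0]
    have hRpos : (0:ℝ) < 2*lam^3 - 3*lam^2 - 4 := by
      nlinarith [mul_pos h20 (by nlinarith : (0:ℝ) < 2*lam^2+lam+2)]
    have hu' : ((3*lam/2)*p2 + (-1)) / ((3*lam^2/4+1)*p2 + (-lam/2))
        = (16*lam^3 - 2*lam^2 - 12*lam) / (8*lam^4 - lam^3 + 2*lam^2 + 4*lam - 8) := by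
      rw [div_eq_div_iff (ne_of_lt hcp2) (ne_of_gt hQpos), hp2d]
      field_simp [h2lne, hl0.ne']
      ring
    have hv' : ((3*lam/2)*q2 + (-1)) / ((3*lam^2/4+1)*q2 + (-lam/2))
        = (4*lam^2 - 6*lam) / (2*lam^3 - 3*lam^2 - 4) := by
      rw [div_eq_div_iff (ne_of_lt hcq2) (ne_of_gt hRpos), hq2d]
      field_simp [hl0.ne']
      ring
    have hp1u : p1 < (16*lam^3 - 2*lam^2 - 12*lam) / (8*lam^4 - lam^3 + 2*lam^2 + 4*lam - 8) := by
      rw [hp1d, div_lt_div_iff₀ hl2 hQpos]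
      nlinarith [mul_pos (mul_pos hl0 hl0) h20, sq_nonneg lam, mul_pos hl0 h20]
    have hvq1 : (4*lam^2 - 6*lam) / (2*lam^3 - 3*lam^2 - 4) < q1 := by
      rw [hq1d, div_lt_div_iff₀ hRpos h20]
      nlinarith [mul_pos h20 (by linarith : (0:ℝ) < 2*lam+1)]
    have huv : (16*lam^3 - 2*lam^2 - 12*lam) / (8*lam^4 - lam^3 + 2*lam^2 + 4*lam - 8)
        ≤ (4*lam^2 - 6*lam) / (2*lam^3 - 3*lam^2 - 4) := by
      rw [← hu', ← hv']
      have e := img_sub (3*lam/2) (-1) (3*lam^2/4+1) (-lam/2) p2 q2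
        (ne_of_lt hcp2) (ne_of_lt hcq2)
      have hd : (3*lam/2)*(-lam/2) - (-1)*(3*lam^2/4+1) = 1 := by ring
      rw [hd, one_mul] at e
      have hq2p2 : 0 < q2 - p2 := by
        have h1 : 2 / (2 - lam) < 0 := div_neg_of_pos_of_neg (by norm_num) h2lneg
        have h2 : (0:ℝ) < 1 / lam ^ 2 := by positivity
        rw [hq2d, hp2d]; linarith
      have hpos : 0 < (q2 - p2) / (((3*lam^2/4+1)*p2 + (-lam/2)) * ((3*lam^2/4+1)*q2 + (-lam/2))) :=
        div_pos hq2p2 (mul_pos_of_neg_of_neg hcp2 hcq2)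
      linarith [e, hpos]
    have hden : ((3*lam^2/4+1 : ℝ):ℂ) * w + ((-lam/2 : ℝ):ℂ) ≠ 0 := by
      intro h
      have hcC : ((3*lam^2/4+1 : ℝ):ℂ) ≠ 0 := by exact_mod_cast ne_of_gt hc3
      have hw1 : w = (((lam/2)/(3*lam^2/4+1) : ℝ):ℂ) := by
        push_cast at h ⊢
        rw [eq_div_iff (by intro h0; apply hcC; push_cast at h0 ⊢; linear_combination h0)]
        linear_combination h
      have hre : w.re = (lam/2)/(3*lam^2/4+1) := by rw [hw1, Complex.ofReal_re]
      have him : w.im = 0 := by rw [hw1, Complex.ofReal_im]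
      rw [hre, him] at Hw
      clear h hw1 hcC hw
      have ht : q2 < (lam/2)/(3*lam^2/4+1) := by
        rw [hq2d, div_lt_div_iff₀ (by positivity) hc3]
        nlinarith [mul_pos (mul_pos h20 h20) h20, mul_pos h20 h20, mul_pos hl0 h20,
          mul_pos (mul_pos hl0 hl0) h20]
      have htp : p2 < (lam/2)/(3*lam^2/4+1) := lt_trans (lt_trans hp2neg hq2pos) ht
      have hprod : 0 < ((lam/2)/(3*lam^2/4+1) - p2) * ((lam/2)/(3*lam^2/4+1) - q2) :=
        mul_pos (sub_pos.2 htp) (sub_pos.2 ht)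
      nlinarith [Hw, hprod]
    constructor
    · rw [show (3 * (lam:ℂ) ^ 2 / 4 + 1) * w - (lam:ℂ) / 2
          = ((3*lam^2/4+1 : ℝ):ℂ) * w + ((-lam/2 : ℝ):ℂ) from by push_cast; ring]
      exact hden
    · have hmap2 : ((3*(lam:ℂ)/2) * w - 1) / ((3*(lam:ℂ)^2/4+1) * w - (lam:ℂ)/2)
          = (((3*lam/2 : ℝ):ℂ) * w + ((-1 : ℝ):ℂ)) / (((3*lam^2/4+1 : ℝ):ℂ) * w + ((-lam/2 : ℝ):ℂ)) := by
        push_cast; ring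
      rw [hmap2, hE1, mem_ball_crit hR1 hp1 hq1]
      have KEY := moebius_re (3*lam/2) (-1) (3*lam^2/4+1) (-lam/2) p2 q2 w hden
        (ne_of_lt hcp2) (ne_of_lt hcq2)
      rw [hu', hv'] at KEY
      have hKpos : 0 < ((3*lam^2/4+1)*p2 + (-lam/2)) * ((3*lam^2/4+1)*q2 + (-lam/2)) *
          Complex.normSq (((3*lam^2/4+1 : ℝ):ℂ) * w + ((-lam/2 : ℝ):ℂ)) :=
        mul_pos (mul_pos_of_neg_of_neg hcp2 hcq2) (Complex.normSq_pos.2 hden)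
      have hDelta : ((3*lam/2)*(-lam/2) - (-1)*(3*lam^2/4+1))^2 = 1 := by ring
      rw [hDelta, one_mul] at KEY
      have HW : (((((3*lam/2 : ℝ):ℂ) * w + ((-1:ℝ):ℂ)) / (((3*lam^2/4+1 : ℝ):ℂ) * w + ((-lam/2 : ℝ):ℂ))).re
            - (16*lam^3 - 2*lam^2 - 12*lam) / (8*lam^4 - lam^3 + 2*lam^2 + 4*lam - 8)) *
          (((((3*lam/2 : ℝ):ℂ) * w + ((-1:ℝ):ℂ)) / (((3*lam^2/4+1 : ℝ):ℂ) * w + ((-lam/2 : ℝ):ℂ))).re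
            - (4*lam^2 - 6*lam) / (2*lam^3 - 3*lam^2 - 4))
          + ((((3*lam/2 : ℝ):ℂ) * w + ((-1:ℝ):ℂ)) / (((3*lam^2/4+1 : ℝ):ℂ) * w + ((-lam/2 : ℝ):ℂ))).im ^ 2 ≤ 0 := by
        refine le_of_mul_le_mul_right ?_ hKpos
        rw [zero_mul, KEY]
        exact Hw
      exact disc_incl hp1u hvq1 huv HW
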